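/- Suppose a sectorial matrix A ∈ ℂ^{n×n} admits two sectorial decompositions A = Q₁* D₁ Q₁ = Q₂* D₂ Q₂ with Q₁, Q₂ invertible and D₁, D₂ diagonal unitary. Then D₁ and D₂ have the same diagonal entries up to permutation (with multiplicity). -/

import Mathlib

open Matrix Finset

section Aux

lemma aux_map_univ_succ {α : Type*} {n : ℕ} (f : Fin (n+1) → α) :
    Multiset.map f (univ : Finset (Fin (n+1))).val
      = f 0 ::ₘ Multiset.map (f ∘ Fin.succ) (univ : Finset (Fin n)).val := by
  rw [Fin.univ_succ, Finset.cons_val, Multiset.map_cons, Finset.map_val, Multiset.map_map]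
  rfl

lemma aux_exists_perm_comp_eq {α : Type*} [DecidableEq α] : ∀ {n : ℕ} (f g : Fin n → α),
    Multiset.map f (univ : Finset (Fin n)).val = Multiset.map g (univ : Finset (Fin n)).val →
    ∃ σ : Equiv.Perm (Fin n), f = g ∘ σ := by
  intro n
  induction n with
  | zero => exact fun f g _ => ⟨1, funext fun i => i.elim0⟩
  | succ n ih =>
    intro f g h
    have h0 : f 0 ∈ Multiset.map g (univ : Finset (Fin (n+1))).val := by
      rw [← h]
      exact Multiset.mem_map.mpr ⟨0, Finset.mem_univ_val _, rfl⟩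
    obtain ⟨j, -, hj⟩ := Multiset.mem_map.mp h0
    set τ := Equiv.swap (0 : Fin (n+1)) j with hτ
    have hgτ : Multiset.map (g ∘ τ) (univ : Finset (Fin (n+1))).val
        = Multiset.map g (univ : Finset (Fin (n+1))).val := by
      have huniv : Multiset.map (⇑τ) (univ : Finset (Fin (n+1))).val
          = (univ : Finset (Fin (n+1))).val :=
        congrArg Finset.val (Finset.map_univ_equiv τ)
      conv_rhs => rw [← huniv]
      rw [Multiset.map_map]
    have h' : Multiset.map f (univ : Finset (Fin (n+1))).val
        = Multiset.map (g ∘ τ) (univ : Finset (Fin (n+1))).val := by rw [hgτ, h]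
    rw [aux_map_univ_succ, aux_map_univ_succ] at h'
    have hfz : f 0 = (g ∘ τ) 0 := by
      simp [hτ, Equiv.swap_apply_left, hj]
    rw [hfz] at h'
    have htail := (Multiset.cons_inj_right _).mp h'
    obtain ⟨σ', hσ'⟩ := ih (f ∘ Fin.succ) ((g ∘ τ) ∘ Fin.succ) htail
    refine ⟨(Equiv.Perm.decomposeFin.symm (0, σ')).trans τ, funext fun i => ?_⟩
    induction i using Fin.cases with
    | zero =>
      simp [hfz, Equiv.Perm.decomposeFin_symm_apply_zero]
    | succ i =>
      have := congrFun hσ' i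
      simp only [Function.comp] at this ⊢
      simp [Equiv.Perm.decomposeFin_symm_apply_succ, this]

lemma aux_quadForm {n : ℕ} (Q : Matrix (Fin n) (Fin n) ℂ) (d : Fin n → ℂ) (y : Fin n → ℂ) :
    star y ⬝ᵥ ((Qᴴ * Matrix.diagonal d * Q) *ᵥ y)
      = ∑ i, (Complex.normSq ((Q *ᵥ y) i) : ℂ) * d i := by
  rw [← Matrix.mulVec_mulVec, ← Matrix.mulVec_mulVec, Matrix.dotProduct_mulVec,
    ← Matrix.star_mulVec]
  simp only [dotProduct, Matrix.mulVec_diagonal, Pi.star_apply, RCLike.star_def]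
  refine Finset.sum_congr rfl fun i _ => ?_
  rw [Complex.normSq_eq_conj_mul_self]
  ring

lemma aux_unit_entry {d : ℂ} (hd : ‖d‖ = 1) : d * star d = 1 := by
  have h2 : d * (starRingEnd ℂ) d = (Complex.normSq d : ℂ) := Complex.mul_conj _
  rw [RCLike.star_def, h2, Complex.normSq_eq_norm_sq, hd]
  norm_num

lemma aux_unit_diag {n : ℕ} {d : Fin n → ℂ} (hd : ∀ i, ‖d i‖ = 1) :
    Matrix.diagonal d * (Matrix.diagonal d)ᴴ = 1 := by
  rw [Matrix.diagonal_conjTranspose, Matrix.diagonal_mul_diagonal]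
  have hfun : (fun i => d i * star d i) = fun _ : Fin n => (1 : ℂ) :=
    funext fun i => aux_unit_entry (hd i)
  rw [hfun, Matrix.diagonal_one]

lemma aux_diagH_inv {n : ℕ} {d : Fin n → ℂ} (hd : ∀ i, ‖d i‖ = 1) :
    ((Matrix.diagonal d)ᴴ)⁻¹ = Matrix.diagonal d := by
  apply Matrix.inv_eq_right_inv
  rw [Matrix.diagonal_conjTranspose, Matrix.diagonal_mul_diagonal]
  have hfun : (fun i => star d i * d i) = fun _ : Fin n => (1 : ℂ) :=
    funext fun i => by rw [mul_comm]; exact aux_unit_entry (hd i)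
  rw [hfun, Matrix.diagonal_one]

lemma aux_sq_prod_eq {n : ℕ} (Q₁ Q₂ : Matrix (Fin n) (Fin n) ℂ) (d₁ d₂ : Fin n → ℂ)
    (hQ₁ : IsUnit Q₁) (hQ₂ : IsUnit Q₂)
    (hd₁ : ∀ i, ‖d₁ i‖ = 1) (hd₂ : ∀ i, ‖d₂ i‖ = 1)
    (h : Q₁ᴴ * Matrix.diagonal d₁ * Q₁ = Q₂ᴴ * Matrix.diagonal d₂ * Q₂) (z : ℂ) :
    ∏ i, (z - d₂ i ^ 2) = ∏ i, (z - d₁ i ^ 2) := by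
  have hQ₂d : IsUnit Q₂.det := (Matrix.isUnit_iff_isUnit_det _).mp hQ₂
  have hdetH : IsUnit Q₂ᴴ.det := by rw [Matrix.det_conjTranspose]; exact hQ₂d.star
  set T := Q₁ * Q₂⁻¹ with hTdef
  have hT : IsUnit T := hQ₁.mul ((Matrix.isUnit_nonsing_inv_iff).mpr hQ₂)
  have hTd : IsUnit T.det := (Matrix.isUnit_iff_isUnit_det _).mp hT
  have hTHd : IsUnit Tᴴ.det := by rw [Matrix.det_conjTranspose]; exact hTd.star
  have hTH : IsUnit Tᴴ := (Matrix.isUnit_iff_isUnit_det _).mpr hTHd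
  have hTQ : T * Q₂ = Q₁ := Matrix.nonsing_inv_mul_cancel_right _ _ hQ₂d
  have hTH2 : Tᴴ = Q₂ᴴ⁻¹ * Q₁ᴴ := by
    rw [hTdef, Matrix.conjTranspose_mul, Matrix.conjTranspose_nonsing_inv]
  have expand : Q₂ᴴ * (Tᴴ * Matrix.diagonal d₁ * T) * Q₂
      = Q₁ᴴ * Matrix.diagonal d₁ * Q₁ := by
    rw [hTH2]
    simp only [Matrix.mul_assoc]
    rw [Matrix.mul_nonsing_inv_cancel_left _ _ hdetH, hTQ]
  have cancel : ∀ M N : Matrix (Fin n) (Fin n) ℂ,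
      Q₂ᴴ * M * Q₂ = Q₂ᴴ * N * Q₂ → M = N := by
    intro M N hMN
    have h2 := congrArg (fun X => Q₂ᴴ⁻¹ * X * Q₂⁻¹) hMN
    simpa only [Matrix.mul_assoc, Matrix.mul_nonsing_inv _ hQ₂d, Matrix.mul_one,
      Matrix.nonsing_inv_mul_cancel_left _ _ hdetH] using h2
  have key : Matrix.diagonal d₂ = Tᴴ * Matrix.diagonal d₁ * T := by
    refine cancel _ _ ?_
    rw [expand, ← h]
  have keyH : (Matrix.diagonal d₂)ᴴ = Tᴴ * (Matrix.diagonal d₁)ᴴ * T := by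
    calc (Matrix.diagonal d₂)ᴴ = (Tᴴ * Matrix.diagonal d₁ * T)ᴴ := by rw [← key]
    _ = Tᴴ * (Matrix.diagonal d₁)ᴴ * T := by
        rw [Matrix.conjTranspose_mul, Matrix.conjTranspose_mul]
        simp [Matrix.mul_assoc, hTdef]
  have key2 : Matrix.diagonal d₂ = T⁻¹ * Matrix.diagonal d₁ * Tᴴ⁻¹ := by
    rw [← aux_diagH_inv hd₂, keyH, Matrix.mul_inv_rev (Tᴴ * (Matrix.diagonal d₁)ᴴ) T,
      Matrix.mul_inv_rev Tᴴ ((Matrix.diagonal d₁)ᴴ), aux_diagH_inv hd₁]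
    simp only [Matrix.mul_assoc]
  have hsq : Matrix.diagonal (fun i => d₂ i * d₂ i)
      = Tᴴ * Matrix.diagonal (fun i => d₁ i * d₁ i) * Tᴴ⁻¹ := by
    rw [← Matrix.diagonal_mul_diagonal d₂ d₂, ← Matrix.diagonal_mul_diagonal d₁ d₁]
    calc Matrix.diagonal d₂ * Matrix.diagonal d₂
        = (Tᴴ * Matrix.diagonal d₁ * T) * (T⁻¹ * Matrix.diagonal d₁ * Tᴴ⁻¹) := by
          rw [← key, ← key2]
      _ = Tᴴ * (Matrix.diagonal d₁ * Matrix.diagonal d₁) * Tᴴ⁻¹ := by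
          simp only [Matrix.mul_assoc, Matrix.mul_nonsing_inv_cancel_left _ _ hTd]
  have hdet : (z • (1 : Matrix (Fin n) (Fin n) ℂ)
        - Matrix.diagonal (fun i => d₂ i * d₂ i)).det
      = (z • (1 : Matrix (Fin n) (Fin n) ℂ)
        - Matrix.diagonal (fun i => d₁ i * d₁ i)).det := by
    have hone : Tᴴ * (z • (1 : Matrix (Fin n) (Fin n) ℂ)) * Tᴴ⁻¹
        = z • (1 : Matrix (Fin n) (Fin n) ℂ) := by
      rw [Matrix.mul_smul, Matrix.mul_one, Matrix.smul_mul, Matrix.mul_nonsing_inv _ hTHd]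
    have hconj : z • (1 : Matrix (Fin n) (Fin n) ℂ) - Matrix.diagonal (fun i => d₂ i * d₂ i)
        = Tᴴ * (z • (1 : Matrix (Fin n) (Fin n) ℂ)
            - Matrix.diagonal (fun i => d₁ i * d₁ i)) * Tᴴ⁻¹ := by
      rw [Matrix.mul_sub, Matrix.sub_mul, hsq, hone]
    rw [hconj, Matrix.det_conj hTH]
  have hx : ∀ v : Fin n → ℂ,
      (z • (1 : Matrix (Fin n) (Fin n) ℂ) - Matrix.diagonal (fun i => v i * v i)).det
      = ∏ i, (z - v i ^ 2) := by
    intro v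
    rw [Matrix.smul_one_eq_diagonal, Matrix.diagonal_sub, Matrix.det_diagonal]
    exact Finset.prod_congr rfl fun i _ => by rw [sq]
  rw [← hx d₂, ← hx d₁, hdet]

open Polynomial in
lemma aux_multiset_eq_of_prod_eq {n : ℕ} (a b : Fin n → ℂ)
    (h : ∀ z : ℂ, ∏ i, (z - a i) = ∏ i, (z - b i)) :
    Multiset.map a (univ : Finset (Fin n)).val = Multiset.map b (univ : Finset (Fin n)).val := by
  have hp : ∀ c : Fin n → ℂ, ∀ z : ℂ,
      Polynomial.eval z (∏ i, (X - C (c i))) = ∏ i, (z - c i) := by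
    intro c z
    rw [Polynomial.eval_prod]
    exact Finset.prod_congr rfl fun i _ => by simp
  have hpq : (∏ i, (X - C (a i))) = ∏ i, (X - C (b i)) :=
    Polynomial.funext fun z => by rw [hp, hp]; exact h z
  have hr : ∀ c : Fin n → ℂ,
      (∏ i, (X - C (c i))).roots = Multiset.map c (univ : Finset (Fin n)).val := by
    intro c
    have : (∏ i, (X - C (c i)))
        = (Multiset.map (fun r => X - C r) (Multiset.map c (univ : Finset (Fin n)).val)).prod := by
      rw [Finset.prod_eq_multiset_prod, Multiset.map_map]
      rfl
    rw [this, Polynomial.roots_multiset_prod_X_sub_C]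
  have := hr a ▸ hr b ▸ congrArg Polynomial.roots hpq
  exact this

lemma aux_sep {n : ℕ} (d : Fin n → ℂ)
    (h0 : ∀ t : Fin n → ℝ, t ∈ stdSimplex ℝ (Fin n) → (∑ i, (t i : ℝ) • d i) ≠ 0) :
    ∃ f : ℂ →L[ℝ] ℝ, ∀ t ∈ stdSimplex ℝ (Fin n), 0 < f (∑ i, (t i : ℝ) • d i) := by
  set L : (Fin n → ℝ) →ₗ[ℝ] ℂ :=
    { toFun := fun t => ∑ i, t i • d i
      map_add' := fun s t => by simp [add_smul, Finset.sum_add_distrib]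
      map_smul' := fun c t => by simp [smul_smul, Finset.smul_sum, mul_assoc] } with hL
  have hcont : Continuous L := by
    show Continuous fun t : Fin n → ℝ => ∑ i, t i • d i
    exact continuous_finset_sum _ fun i _ => (continuous_apply i).smul continuous_const
  set S : Set ℂ := L '' stdSimplex ℝ (Fin n) with hS
  have hconv : Convex ℝ S := (convex_stdSimplex ℝ (Fin n)).linear_image L
  have hclosed : IsClosed S := ((isCompact_stdSimplex ℝ (Fin n)).image hcont).isClosed
  have h0S : (0 : ℂ) ∉ S := by
    rintro ⟨t, ht, h⟩
    exact h0 t ht h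
  obtain ⟨f, u, hfu, hb⟩ := geometric_hahn_banach_point_closed hconv hclosed h0S
  rw [map_zero] at hfu
  refine ⟨f, fun t ht => lt_trans hfu (hb _ ⟨t, ht, rfl⟩)⟩

end Aux

/-- The numerical range of a complex square matrix. -/
def numRange {n : ℕ} (A : Matrix (Fin n) (Fin n) ℂ) : Set ℂ :=
  {z | ∃ x : Fin n → ℂ, star x ⬝ᵥ x = 1 ∧ z = star x ⬝ᵥ (A *ᵥ x)}

/-- Uniqueness of the diagonal unitary factor in the sectorial decomposition:
two sectorial decompositions of the same sectorial matrix have the same diagonal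
entries up to permutation. -/
theorem sectorial_decomposition_unique (n : ℕ)
    (A Q₁ Q₂ : Matrix (Fin n) (Fin n) ℂ) (d₁ d₂ : Fin n → ℂ)
    (hA : (0 : ℂ) ∉ numRange A)
    (hQ₁ : IsUnit Q₁) (hQ₂ : IsUnit Q₂)
    (hd₁ : ∀ i, ‖d₁ i‖ = 1) (hd₂ : ∀ i, ‖d₂ i‖ = 1)
    (h₁ : A = Q₁ᴴ * Matrix.diagonal d₁ * Q₁)
    (h₂ : A = Q₂ᴴ * Matrix.diagonal d₂ * Q₂) :
    ∃ σ : Equiv.Perm (Fin n), d₂ = d₁ ∘ σ := by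
  have hQ₁d : IsUnit Q₁.det := (Matrix.isUnit_iff_isUnit_det _).mp hQ₁
  have hQ₂d : IsUnit Q₂.det := (Matrix.isUnit_iff_isUnit_det _).mp hQ₂
  obtain ⟨σ, hσ⟩ := aux_exists_perm_comp_eq (fun i => d₂ i ^ 2) (fun i => d₁ i ^ 2)
    (aux_multiset_eq_of_prod_eq _ _
      (aux_sq_prod_eq Q₁ Q₂ d₁ d₂ hQ₁ hQ₂ hd₁ hd₂ (h₁.symm.trans h₂)))
  -- the sectorial condition gives a functional positive on all relevant values
  have h0 : ∀ t : Fin n → ℝ, t ∈ stdSimplex ℝ (Fin n) → (∑ i, (t i : ℝ) • d₁ i) ≠ 0 := by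
    intro t ht hzero
    set x : Fin n → ℂ := fun i => ((Real.sqrt (t i) : ℝ) : ℂ) with hxdef
    set y : Fin n → ℂ := Q₁⁻¹ *ᵥ x with hydef
    have hxy : Q₁ *ᵥ y = x := by
      rw [hydef, Matrix.mulVec_mulVec, Matrix.mul_nonsing_inv _ hQ₁d, Matrix.one_mulVec]
    have hns : ∀ i, Complex.normSq (x i) = t i := fun i => by
      rw [hxdef]
      simp [Complex.normSq_ofReal, Real.mul_self_sqrt (ht.1 i)]
    have hAy : star y ⬝ᵥ (A *ᵥ y) = 0 := by
      rw [h₁, aux_quadForm Q₁ d₁ y, hxy]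
      have heq : ∀ i, (Complex.normSq (x i) : ℂ) * d₁ i = (t i : ℝ) • d₁ i := fun i => by
        rw [hns i, Complex.real_smul]
      rw [Finset.sum_congr rfl fun i _ => heq i, hzero]
    set r : ℝ := ∑ i, Complex.normSq (y i) with hrdef
    have hyr : star y ⬝ᵥ y = (r : ℂ) := by
      rw [hrdef]
      push_cast
      simp only [dotProduct, Pi.star_apply, RCLike.star_def]
      exact Finset.sum_congr rfl fun i _ => (Complex.normSq_eq_conj_mul_self).symm
    have hrpos : 0 < r := by
      rcases (Finset.sum_nonneg fun i (_ : i ∈ univ) =>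
        Complex.normSq_nonneg (y i)).lt_or_eq with hlt | heq
      · exact hlt
      · exfalso
        have hy0 : y = 0 := funext fun i => by
          have := (Finset.sum_eq_zero_iff_of_nonneg
            (fun i _ => Complex.normSq_nonneg (y i))).mp heq.symm i (Finset.mem_univ i)
          exact Complex.normSq_eq_zero.mp this
        have hx0 : x = 0 := by rw [← hxy, hy0, Matrix.mulVec_zero]
        have ht1 : ∑ i, t i = 1 := ht.2
        have hti : ∀ i, t i = 0 := fun i => by
          rw [← hns i, congrFun hx0 i, Pi.zero_apply, map_zero]
        rw [Finset.sum_congr rfl fun i _ => hti i] at ht1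
        simp at ht1
    have hsr : Real.sqrt r ≠ 0 := ne_of_gt (Real.sqrt_pos.mpr hrpos)
    set c : ℂ := ((Real.sqrt r : ℝ) : ℂ)⁻¹ with hcdef
    have hstarc : star c = c := by
      rw [hcdef, ← Complex.ofReal_inv, RCLike.star_def, Complex.conj_ofReal]
    have hreal : (Real.sqrt r)⁻¹ * (Real.sqrt r)⁻¹ * r = 1 := by
      field_simp
      rw [Real.sq_sqrt hrpos.le]
    have hcc : star c * c * (r : ℂ) = 1 := by
      rw [hstarc, hcdef, ← Complex.ofReal_inv, ← Complex.ofReal_mul, ← Complex.ofReal_mul,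
        hreal, Complex.ofReal_one]
    refine hA ⟨c • y, ?_, ?_⟩
    · rw [star_smul, smul_dotProduct, dotProduct_smul, hyr, smul_eq_mul,
        smul_eq_mul, ← mul_assoc, hcc]
    · rw [Matrix.mulVec_smul, star_smul, smul_dotProduct, dotProduct_smul,
        hAy, smul_eq_mul, smul_eq_mul]
      ring
  obtain ⟨f, hf⟩ := aux_sep d₁ h0
  have hfd₁ : ∀ i, 0 < f (d₁ i) := by
    intro i
    have h := hf (Pi.single i 1) (single_mem_stdSimplex ℝ i)
    have hsum : ∑ j, (Pi.single i 1 : Fin n → ℝ) j • d₁ j = d₁ i := by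
      rw [Finset.sum_eq_single i]
      · simp
      · intro j _ hji
        simp [Pi.single_apply, hji]
      · intro hi
        exact absurd (Finset.mem_univ i) hi
    rwa [hsum] at h
  have hfd₂ : ∀ j, 0 < f (d₂ j) := by
    intro j
    set y : Fin n → ℂ := Q₂⁻¹ *ᵥ Pi.single j 1 with hydef
    have hxy2 : Q₂ *ᵥ y = Pi.single j 1 := by
      rw [hydef, Matrix.mulVec_mulVec, Matrix.mul_nonsing_inv _ hQ₂d, Matrix.one_mulVec]
    have e1 : star y ⬝ᵥ (A *ᵥ y) = d₂ j := by
      rw [h₂, aux_quadForm Q₂ d₂ y, hxy2]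
      rw [Finset.sum_eq_single j]
      · simp
      · intro i _ hij
        simp [Pi.single_apply, hij]
      · intro hj
        exact absurd (Finset.mem_univ j) hj
    set x : Fin n → ℂ := Q₁ *ᵥ y with hxdef
    have e2 : star y ⬝ᵥ (A *ᵥ y) = ∑ i, (Complex.normSq (x i) : ℂ) * d₁ i := by
      rw [h₁, aux_quadForm Q₁ d₁ y]
    have hd2j : d₂ j = ∑ i, (Complex.normSq (x i) : ℝ) • d₁ i := by
      rw [← e1, e2]
      exact Finset.sum_congr rfl fun i _ => by rw [Complex.real_smul]
    have hxne : ∃ i, x i ≠ 0 := by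
      by_contra hcon
      push_neg at hcon
      have hx0 : x = 0 := funext hcon
      have hy0 : y = 0 := by
        have : Q₁⁻¹ *ᵥ x = y := by
          rw [hxdef, Matrix.mulVec_mulVec, Matrix.nonsing_inv_mul _ hQ₁d, Matrix.one_mulVec]
        rw [← this, hx0, Matrix.mulVec_zero]
      have : (Pi.single j 1 : Fin n → ℂ) = 0 := by
        rw [← hxy2, hy0, Matrix.mulVec_zero]
      have := congrFun this j
      simp at this
    obtain ⟨i₀, hi₀⟩ := hxne
    have : f (d₂ j) = ∑ i, Complex.normSq (x i) * f (d₁ i) := by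
      rw [hd2j, map_sum]
      exact Finset.sum_congr rfl fun i _ => by rw [_root_.map_smul, smul_eq_mul]
    rw [this]
    refine Finset.sum_pos' (fun i _ => mul_nonneg (Complex.normSq_nonneg _) (hfd₁ i).le) ?_
    exact ⟨i₀, Finset.mem_univ i₀,
      mul_pos (Complex.normSq_pos.mpr hi₀) (hfd₁ i₀)⟩
  refine ⟨σ, funext fun i => ?_⟩
  have hsq : d₂ i ^ 2 = d₁ (σ i) ^ 2 := congrFun hσ i
  have hfact : (d₂ i - d₁ (σ i)) * (d₂ i + d₁ (σ i)) = 0 := by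
    linear_combination hsq
  rcases mul_eq_zero.mp hfact with hc | hc
  · exact sub_eq_zero.mp hc
  · exfalso
    have hneg : d₂ i = -d₁ (σ i) := eq_neg_of_add_eq_zero_left hc
    have := hfd₂ i
    rw [hneg, map_neg] at this
    linarith [hfd₁ (σ i)]
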